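/- arXiv:1810.07228 — 2 statements merged into one kernel-verified Lean document; each statement's English description precedes it below -/
import Mathlib

section
/- Let X(t) be the normalized fundamental matrix of x' = A(t)x, where A is continuous and T-periodic, and assume det(I − X(T)) ≠ 0. Then for every continuous T-periodic f with values in ℂⁿ, there exists a unique T-periodic solution x of x' = A(t)x + f(t); moreover x(0) = (I − X(T))⁻¹ ∫₀ᵀ X(T)X(s)⁻¹ f(s) ds. -/
open Matrix MeasureTheory intervalIntegral Set

private lemma aux_lipschitz_mulVec_affine {n : ℕ} (M : Matrix (Fin n) (Fin n) ℂ) (c : Fin n → ℂ)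
    {K : NNReal} (hK : (∑ i, ∑ j, ‖M i j‖) ≤ (K : ℝ)) :
    LipschitzWith K (fun x : Fin n → ℂ => M *ᵥ x + c) := by
  apply LipschitzWith.of_dist_le_mul
  intro x y
  rw [dist_eq_norm]
  have h1 : (M *ᵥ x + c) - (M *ᵥ y + c) = M *ᵥ (x - y) := by
    rw [Matrix.mulVec_sub]; abel
  rw [h1, dist_eq_norm]
  set v := x - y with hv
  have hnn : (0:ℝ) ≤ (K:ℝ) * ‖v‖ := by positivity
  rw [pi_norm_le_iff_of_nonneg hnn]
  intro i
  have h2 : (M *ᵥ v) i = ∑ j, M i j * v j := by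
    simp [Matrix.mulVec, dotProduct]
  rw [h2]
  calc ‖∑ j, M i j * v j‖ ≤ ∑ j, ‖M i j * v j‖ := norm_sum_le _ _
    _ ≤ ∑ j, ‖M i j‖ * ‖v‖ := by
        refine Finset.sum_le_sum fun j _ => ?_
        rw [norm_mul]
        exact mul_le_mul_of_nonneg_left (norm_le_pi_norm v j) (norm_nonneg _)
    _ = (∑ j, ‖M i j‖) * ‖v‖ := (Finset.sum_mul _ _ _).symm
    _ ≤ (K:ℝ) * ‖v‖ := by
        refine mul_le_mul_of_nonneg_right (le_trans ?_ hK) (norm_nonneg _)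
        exact Finset.single_le_sum (f := fun i => ∑ j, ‖M i j‖)
          (fun i _ => Finset.sum_nonneg fun j _ => norm_nonneg _) (Finset.mem_univ i)

private lemma aux_linear_ode_unique {n : ℕ} (A : ℝ → Matrix (Fin n) (Fin n) ℂ)
    (hA : ∀ i j, Continuous fun t => A t i j)
    (f : ℝ → Fin n → ℂ) (hf : Continuous f)
    (u w : ℝ → Fin n → ℂ)
    (hu : ∀ t, HasDerivAt u (A t *ᵥ u t + f t) t)
    (hw : ∀ t, HasDerivAt w (A t *ᵥ w t + f t) t)
    (h0 : u 0 = w 0) : ∀ t, u t = w t := by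
  intro t
  set a : ℝ := -(|t| + 1) with ha
  set b : ℝ := |t| + 1 with hb
  have habs : (0:ℝ) ≤ |t| := abs_nonneg t
  have hab : a < b := by rw [ha, hb]; nlinarith
  have h0ab : (0:ℝ) ∈ Ioo a b := by
    constructor
    · rw [ha]; nlinarith
    · rw [hb]; nlinarith
  have htab : t ∈ Icc a b := by
    constructor
    · rw [ha]; cases abs_cases t with
      | inl h => nlinarith [h.1]
      | inr h => nlinarith [h.1]
    · rw [hb]; nlinarith [le_abs_self t]
  set p : ℝ → ℝ := fun s => max a (min b s) with hp
  have hpmem : ∀ s, p s ∈ Icc a b := fun s =>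
    ⟨le_max_left _ _, max_le hab.le (min_le_left _ _)⟩
  have hpeq : ∀ s ∈ Icc a b, p s = s := by
    intro s hs
    rw [hp]
    simp only []
    rw [min_eq_right hs.2, max_eq_right hs.1]
  set φ : ℝ → ℝ := fun s => ∑ i, ∑ j, ‖A s i j‖ with hφ
  have hφc : Continuous φ := by
    apply continuous_finset_sum
    intro i _
    exact continuous_finset_sum _ fun j _ => (hA i j).norm
  obtain ⟨s0, hs0mem, hs0⟩ := isCompact_Icc.exists_isMaxOn
    ⟨0, Ioo_subset_Icc_self h0ab⟩ hφc.continuousOn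
  set K : NNReal := (φ s0).toNNReal with hKdef
  set v : ℝ → (Fin n → ℂ) → (Fin n → ℂ) := fun s x => A (p s) *ᵥ x + f (p s) with hvdef
  have hv : ∀ s, LipschitzWith K (v s) := by
    intro s
    apply aux_lipschitz_mulVec_affine
    calc (∑ i, ∑ j, ‖A (p s) i j‖) = φ (p s) := rfl
      _ ≤ φ s0 := hs0 (hpmem s)
      _ ≤ (K : ℝ) := Real.le_coe_toNNReal _
  have hucont : Continuous u := continuous_iff_continuousAt.2 fun s => (hu s).continuousAt
  have hwcont : Continuous w := continuous_iff_continuousAt.2 fun s => (hw s).continuousAt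
  have hu' : ∀ s ∈ Ioo a b, HasDerivAt u (v s (u s)) s := by
    intro s hs
    have := hu s
    rw [hvdef]
    simp only [hpeq s (Ioo_subset_Icc_self hs)]
    exact this
  have hw' : ∀ s ∈ Ioo a b, HasDerivAt w (v s (w s)) s := by
    intro s hs
    have := hw s
    rw [hvdef]
    simp only [hpeq s (Ioo_subset_Icc_self hs)]
    exact this
  have key := ODE_solution_unique_of_mem_Icc (v := v) (s := fun _ => univ) (t₀ := 0)
    (fun s _ => (hv s).lipschitzOnWith) h0ab hucont.continuousOn hu' (fun _ _ => trivial)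
    hwcont.continuousOn hw' (fun _ _ => trivial) h0
  exact key htab

theorem periodic_linear_system_unique_periodic_solution
    {n : ℕ} (T : ℝ) (hT : 0 < T)
    (A : ℝ → Matrix (Fin n) (Fin n) ℂ)
    (hA : ∀ i j, Continuous fun t => A t i j) (hAper : ∀ t, A (t + T) = A t)
    (f : ℝ → Fin n → ℂ) (hf : Continuous f) (hfper : ∀ t, f (t + T) = f t)
    (X : ℝ → Matrix (Fin n) (Fin n) ℂ)
    (hX : ∀ t i j, HasDerivAt (fun s => X s i j) ((A t * X t) i j) t)
    (hX0 : X 0 = 1) (hXu : ∀ t, IsUnit (X t))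
    (hdet : (1 - X T).det ≠ 0) :
    (∃! x : ℝ → Fin n → ℂ,
        (∀ t, HasDerivAt x (A t *ᵥ x t + f t) t) ∧ (∀ t, x (t + T) = x t)) ∧
      ∀ x : ℝ → Fin n → ℂ,
        ((∀ t, HasDerivAt x (A t *ᵥ x t + f t) t) ∧ (∀ t, x (t + T) = x t)) →
          x 0 = (1 - X T)⁻¹ *ᵥ ∫ s in (0:ℝ)..T, (X T * (X s)⁻¹) *ᵥ f s := by
  have hXc : Continuous X :=
    continuous_matrix fun i j => continuous_iff_continuousAt.2 fun t => (hX t i j).continuousAt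
  have hdetX : ∀ t, (X t).det ≠ 0 := fun t =>
    ((Matrix.isUnit_iff_isUnit_det _).1 (hXu t)).ne_zero
  have hXinvc : Continuous fun s => (X s)⁻¹ := by
    have h : (fun s => (X s)⁻¹) = fun s => ((X s).det)⁻¹ • (X s).adjugate := by
      funext s; rw [Matrix.inv_def, Ring.inverse_eq_inv']
    rw [h]
    exact (hXc.matrix_det.inv₀ hdetX).smul hXc.matrix_adjugate
  set g : ℝ → Fin n → ℂ := fun s => (X s)⁻¹ *ᵥ f s with hg_def
  have hgc : Continuous g := hXinvc.matrix_mulVec hf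
  -- the general solution with initial value v0
  set sol : (Fin n → ℂ) → ℝ → Fin n → ℂ :=
    fun v0 t => X t *ᵥ (v0 + ∫ s in (0:ℝ)..t, g s) with hsol_def
  have hsol0 : ∀ v0, sol v0 0 = v0 := by
    intro v0; rw [hsol_def]; simp [hX0]
  have hsolderiv : ∀ v0 t, HasDerivAt (sol v0) (A t *ᵥ (sol v0) t + f t) t := by
    intro v0 t
    set c : ℝ → Fin n → ℂ := fun t => v0 + ∫ s in (0:ℝ)..t, g s with hc_def
    have hc : HasDerivAt c (g t) t := ((hgc.integral_hasStrictDerivAt 0 t).hasDerivAt).const_add v0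
    have hcomp : ∀ j, HasDerivAt (fun t => c t j) (g t j) t := fun j => hasDerivAt_pi.1 hc j
    rw [hasDerivAt_pi]
    intro i
    have hsum : HasDerivAt (fun t => ∑ j, X t i j * c t j)
        (∑ j, ((A t * X t) i j * c t j + X t i j * g t j)) t :=
      HasDerivAt.fun_sum fun j _ => (hX t i j).mul (hcomp j)
    have heq1 : (fun t => sol v0 t i) = fun t => ∑ j, X t i j * c t j := by
      funext s; rw [hsol_def]; simp [Matrix.mulVec, dotProduct, hc_def]
    rw [heq1]
    have e2 : X t *ᵥ g t = f t := by
      rw [hg_def]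
      show X t *ᵥ ((X t)⁻¹ *ᵥ f t) = f t
      rw [Matrix.mulVec_mulVec, Matrix.mul_nonsing_inv _ (isUnit_iff_ne_zero.2 (hdetX t)), Matrix.one_mulVec]
    have e3 : (A t *ᵥ sol v0 t + f t) i = ∑ j, ((A t * X t) i j * c t j + X t i j * g t j) := by
      rw [Finset.sum_add_distrib]
      have e1 : A t *ᵥ sol v0 t = (A t * X t) *ᵥ c t := by
        rw [hsol_def]
        exact Matrix.mulVec_mulVec _ _ _
      rw [Pi.add_apply, e1, ← e2]
      simp [Matrix.mulVec, dotProduct]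
    rw [e3]
    exact hsum
  -- value at T
  set b0 : Fin n → ℂ := ∫ s in (0:ℝ)..T, (X T * (X s)⁻¹) *ᵥ f s with hb0_def
  have hb0 : b0 = X T *ᵥ ∫ s in (0:ℝ)..T, g s := by
    set L : (Fin n → ℂ) →L[ℂ] (Fin n → ℂ) :=
      LinearMap.toContinuousLinearMap ((X T).mulVecLin) with hL
    have hLev : ∀ x, L x = X T *ᵥ x := fun x => rfl
    rw [hb0_def]
    have : ∀ s, (X T * (X s)⁻¹) *ᵥ f s = L (g s) := by
      intro s
      rw [hLev, hg_def]
      exact (Matrix.mulVec_mulVec _ _ _).symm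
    simp_rw [this]
    rw [L.intervalIntegral_comp_comm (hgc.intervalIntegrable _ _)]
    rfl
  have hsolT : ∀ v0, sol v0 T = X T *ᵥ v0 + b0 := by
    intro v0
    rw [hsol_def]
    show X T *ᵥ (v0 + ∫ s in (0:ℝ)..T, g s) = _
    rw [Matrix.mulVec_add, hb0]
  -- initial value of the periodic solution
  set x₀ : Fin n → ℂ := (1 - X T)⁻¹ *ᵥ b0 with hx₀_def
  have h1 : (1 - X T) *ᵥ x₀ = b0 := by
    rw [hx₀_def, Matrix.mulVec_mulVec, Matrix.mul_nonsing_inv _ (isUnit_iff_ne_zero.2 hdet), Matrix.one_mulVec]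
  have hx0T : sol x₀ T = sol x₀ 0 := by
    rw [hsolT, hsol0]
    have h2 : X T *ᵥ x₀ + b0 = x₀ := by
      rw [← h1, Matrix.sub_mulVec, Matrix.one_mulVec]
      abel
    exact h2
  -- periodicity of sol x₀
  have hper : ∀ t, sol x₀ (t + T) = sol x₀ t := by
    have hshift : ∀ t, HasDerivAt (fun s => sol x₀ (s + T))
        (A t *ᵥ (sol x₀ (t + T)) + f t) t := by
      intro t
      have hadd : HasDerivAt (fun s : ℝ => s + T) 1 t := by
        simpa using (hasDerivAt_id t).add_const T
      have h := HasDerivAt.scomp t (hsolderiv x₀ (t + T)) hadd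
      simp only [one_smul, Function.comp] at h
      rw [hAper t, hfper t] at h
      exact h
    exact aux_linear_ode_unique A hA f hf _ _ hshift (hsolderiv x₀)
      (by rw [zero_add]; exact hx0T)
  -- every solution equals sol of its initial value
  have hxeq : ∀ x : ℝ → Fin n → ℂ, (∀ t, HasDerivAt x (A t *ᵥ x t + f t) t) →
      ∀ t, x t = sol (x 0) t := by
    intro x hx'
    exact aux_linear_ode_unique A hA f hf x (sol (x 0)) hx' (hsolderiv _)
      (by rw [hsol0])
  -- every periodic solution has initial value x₀
  have hx0eq : ∀ x : ℝ → Fin n → ℂ,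
      ((∀ t, HasDerivAt x (A t *ᵥ x t + f t) t) ∧ (∀ t, x (t + T) = x t)) → x 0 = x₀ := by
    rintro x ⟨hx1, hx2⟩
    have hTeq : x T = x 0 := by have := hx2 0; rwa [zero_add] at this
    have h3 : x T = X T *ᵥ x 0 + b0 := by rw [hxeq x hx1 T, hsolT]
    have h4 : (1 - X T) *ᵥ x 0 = b0 := by
      rw [Matrix.sub_mulVec, Matrix.one_mulVec, sub_eq_iff_eq_add]
      rw [hTeq] at h3
      conv_lhs => rw [h3]
      abel
    rw [hx₀_def, ← h4, Matrix.mulVec_mulVec, Matrix.nonsing_inv_mul _ (isUnit_iff_ne_zero.2 hdet), Matrix.one_mulVec]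
  constructor
  · refine ⟨sol x₀, ⟨hsolderiv x₀, hper⟩, ?_⟩
    rintro x ⟨hx1, hx2⟩
    funext t
    rw [hxeq x hx1 t, hx0eq x ⟨hx1, hx2⟩]
  · intro x hx
    exact hx0eq x hx
end

section
/- Let Z(t) be the normalized fundamental matrix of −z' = A(t)*z with det(I − Z(T)) ≠ 0, let 0 < t₁ < T, and h ∈ ℂⁿ. Then the unique function z : [0,T] → ℂⁿ satisfying −z' = A(t)*z on (0,T)\{t₁}, the jump condition z(t₁+0) − z(t₁−0) = h, and periodicity z(0) = z(T), is given by z(t) = Z(t)·M(t)·Z(t₁)⁻¹ h, where M(t) = (I − Z(T))⁻¹Z(T) + χ_{(t₁,T)}(t)·I. -/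
open Matrix Set
open scoped NNReal

set_option maxHeartbeats 1000000

section NormSection
attribute [local instance] Matrix.linftyOpNormedAddCommGroup

private lemma exists_lipschitz_bound {n : ℕ} (T : ℝ) (A : ℝ → Matrix (Fin n) (Fin n) ℂ)
    (hA : ∀ i j, Continuous fun t => A t i j) :
    ∃ K : ℝ≥0, ∀ t ∈ Set.Icc (0:ℝ) T,
      LipschitzWith K (fun y : Fin n → ℂ => (-(A t)ᴴ) *ᵥ y) := by
  have hcont : Continuous fun t => ∑ i, ∑ j, ‖A t i j‖ :=
    continuous_finset_sum _ fun i _ => continuous_finset_sum _ fun j _ => (hA i j).norm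
  obtain ⟨C, hC⟩ := (isCompact_Icc (a := (0:ℝ)) (b := T)).exists_bound_of_continuousOn
      hcont.continuousOn
  refine ⟨C.toNNReal, fun t ht => ?_⟩
  have hlip : LipschitzWith ‖(-(A t)ᴴ : Matrix (Fin n) (Fin n) ℂ)‖₊
      (fun y : Fin n → ℂ => (-(A t)ᴴ) *ᵥ y) :=
    LipschitzWith.of_dist_le_mul fun x y => by
      rw [dist_eq_norm, dist_eq_norm, ← Matrix.mulVec_sub]
      simpa using Matrix.linfty_opNorm_mulVec (-(A t)ᴴ) (x - y)
  refine hlip.weaken ?_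
  rw [nnnorm_neg, Matrix.linfty_opNNNorm_def]
  refine Finset.sup_le fun i _ => ?_
  rw [← NNReal.coe_le_coe]
  push_cast
  calc ∑ j, ‖(A t)ᴴ i j‖ = ∑ j, ‖A t j i‖ := by
        simp [Matrix.conjTranspose_apply]
    _ ≤ ∑ j, ∑ j', ‖A t j j'‖ :=
        Finset.sum_le_sum fun j _ => Finset.single_le_sum (fun _ _ => norm_nonneg _)
          (Finset.mem_univ i)
    _ ≤ |∑ j, ∑ j', ‖A t j j'‖| := le_abs_self _
    _ ≤ C := by simpa [Real.norm_eq_abs] using hC t ht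
    _ ≤ max C 0 := le_max_left _ _
    _ = C.toNNReal := (Real.coe_toNNReal' C).symm

end NormSection

private lemma hasDerivAt_Z_mulVec {n : ℕ} (A Z : ℝ → Matrix (Fin n) (Fin n) ℂ)
    (hZ : ∀ t i j, HasDerivAt (fun s => Z s i j) ((-((A t)ᴴ * Z t)) i j) t)
    (c : Fin n → ℂ) (t : ℝ) :
    HasDerivAt (fun s => Z s *ᵥ c) (-((A t)ᴴ *ᵥ (Z t *ᵥ c))) t := by
  rw [hasDerivAt_pi]
  intro i
  have key : HasDerivAt (fun s => ∑ j, Z s i j * c j) (∑ j, (-((A t)ᴴ * Z t)) i j * c j) t :=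
    HasDerivAt.fun_sum fun j _ => (hZ t i j).mul_const (c j)
  have h2 : (-((A t)ᴴ *ᵥ (Z t *ᵥ c))) i = ∑ j, (-((A t)ᴴ * Z t)) i j * c j := by
    rw [Matrix.mulVec_mulVec, ← Matrix.neg_mulVec]
    simp [Matrix.mulVec, dotProduct]
  rw [show (fun s => (Z s *ᵥ c) i) = fun s => ∑ j, Z s i j * c j from
    funext fun s => by simp [Matrix.mulVec, dotProduct], h2]
  exact key


theorem jump_problem_solution_formula
    {n : ℕ} (T t₁ : ℝ) (ht₁ : 0 < t₁) (ht₁T : t₁ < T)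
    (A Z : ℝ → Matrix (Fin n) (Fin n) ℂ)
    (hA : ∀ i j, Continuous fun t => A t i j)
    (hZ : ∀ t i j, HasDerivAt (fun s => Z s i j) ((-((A t)ᴴ * Z t)) i j) t)
    (hZ0 : Z 0 = 1) (hZu : ∀ t, IsUnit (Z t))
    (hdet : (1 - Z T).det ≠ 0)
    (h : Fin n → ℂ) (z₁ z₂ : ℝ → Fin n → ℂ)
    (hz₁ : ∀ t ∈ Set.Icc (0 : ℝ) t₁, HasDerivAt z₁ (-((A t)ᴴ *ᵥ z₁ t)) t)
    (hz₂ : ∀ t ∈ Set.Icc t₁ T, HasDerivAt z₂ (-((A t)ᴴ *ᵥ z₂ t)) t)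
    (hjump : z₂ t₁ = z₁ t₁ + h) (hper : z₂ T = z₁ 0) :
    ∀ t ∈ Set.Ico (0 : ℝ) T,
      (if t ≤ t₁ then z₁ t else z₂ t) =
        (Z t * ((1 - Z T)⁻¹ * Z T +
          (if t₁ < t then (1 : Matrix (Fin n) (Fin n) ℂ) else 0)) * (Z t₁)⁻¹) *ᵥ h := by
  have hT0 : (0:ℝ) < T := ht₁.trans ht₁T
  obtain ⟨K, hK⟩ := exists_lipschitz_bound T A hA
  -- clamped vector field
  set τ : ℝ → ℝ := fun t => max 0 (min t T) with hτdef
  have hτmem : ∀ t, τ t ∈ Icc (0:ℝ) T := fun t =>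
    ⟨le_max_left _ _, max_le hT0.le (min_le_right _ _)⟩
  have hτeq : ∀ t ∈ Icc (0:ℝ) T, τ t = t := by
    intro t ht
    simp only [hτdef, min_eq_left ht.2, max_eq_right ht.1]
  set v : ℝ → (Fin n → ℂ) → (Fin n → ℂ) := fun t y => (-(A (τ t))ᴴ) *ᵥ y with hvdef
  have hlip : ∀ t, LipschitzOnWith K (v t) Set.univ := fun t =>
    (hK _ (hτmem t)).lipschitzOnWith
  have hveq : ∀ t ∈ Icc (0:ℝ) T, ∀ y, v t y = -((A t)ᴴ *ᵥ y) := by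
    intro t ht y
    simp only [hvdef, hτeq t ht, Matrix.neg_mulVec]
  set c₁ := z₁ 0 with hc₁
  -- z₁ = Z • c₁ on [0, t₁]
  have sub₁ : Icc (0:ℝ) t₁ ⊆ Icc 0 T := Icc_subset_Icc le_rfl ht₁T.le
  have e₁ : Set.EqOn z₁ (fun s => Z s *ᵥ c₁) (Icc 0 t₁) :=
    ODE_solution_unique_of_mem_Icc_right (fun t _ => hlip t)
      (fun t ht => (hz₁ t ht).continuousAt.continuousWithinAt)
      (fun t ht => by
        rw [hveq t (sub₁ (Ico_subset_Icc_self ht))]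
        exact (hz₁ t (Ico_subset_Icc_self ht)).hasDerivWithinAt)
      (fun t ht => Set.mem_univ _)
      (fun t ht => (hasDerivAt_Z_mulVec A Z hZ c₁ t).continuousAt.continuousWithinAt)
      (fun t ht => by
        rw [hveq t (sub₁ (Ico_subset_Icc_self ht))]
        exact (hasDerivAt_Z_mulVec A Z hZ c₁ t).hasDerivWithinAt)
      (fun t ht => Set.mem_univ _)
      (by show z₁ 0 = Z 0 *ᵥ c₁
          rw [hZ0, Matrix.one_mulVec])
  have hu₁ : IsUnit (Z t₁).det := (Matrix.isUnit_iff_isUnit_det _).mp (hZu t₁)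
  set w := (Z t₁)⁻¹ *ᵥ h with hw
  -- z₂ t₁ = Z t₁ *ᵥ (c₁ + w)
  have hz₂t₁ : z₂ t₁ = Z t₁ *ᵥ (c₁ + w) := by
    rw [hjump, e₁ (Set.right_mem_Icc.mpr ht₁.le), Matrix.mulVec_add, hw,
      Matrix.mulVec_mulVec, Matrix.mul_nonsing_inv _ hu₁, Matrix.one_mulVec]
  -- z₂ = Z • (c₁ + w) on [t₁, T]
  have sub₂ : Icc t₁ T ⊆ Icc 0 T := Icc_subset_Icc ht₁.le le_rfl
  have e₂ : Set.EqOn z₂ (fun s => Z s *ᵥ (c₁ + w)) (Icc t₁ T) :=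
    ODE_solution_unique_of_mem_Icc_right (fun t _ => hlip t)
      (fun t ht => (hz₂ t ht).continuousAt.continuousWithinAt)
      (fun t ht => by
        rw [hveq t (sub₂ (Ico_subset_Icc_self ht))]
        exact (hz₂ t (Ico_subset_Icc_self ht)).hasDerivWithinAt)
      (fun t ht => Set.mem_univ _)
      (fun t ht => (hasDerivAt_Z_mulVec A Z hZ (c₁ + w) t).continuousAt.continuousWithinAt)
      (fun t ht => by
        rw [hveq t (sub₂ (Ico_subset_Icc_self ht))]
        exact (hasDerivAt_Z_mulVec A Z hZ (c₁ + w) t).hasDerivWithinAt)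
      (fun t ht => Set.mem_univ _)
      hz₂t₁
  -- periodicity gives the value of c₁
  have hu : IsUnit (1 - Z T).det := isUnit_iff_ne_zero.mpr hdet
  have hZT : z₂ T = Z T *ᵥ (c₁ + w) := e₂ (Set.right_mem_Icc.mpr ht₁T.le)
  have hcirc : c₁ = Z T *ᵥ c₁ + Z T *ᵥ w := by
    rw [← Matrix.mulVec_add, ← hZT, hper]
  have hc₁eq : c₁ = ((1 - Z T)⁻¹ * Z T) *ᵥ w := by
    have h1 : (1 - Z T) *ᵥ c₁ = Z T *ᵥ w := by
      rw [Matrix.sub_mulVec, Matrix.one_mulVec, sub_eq_iff_eq_add']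
      exact hcirc
    calc c₁ = ((1 - Z T)⁻¹ * (1 - Z T)) *ᵥ c₁ := by
          rw [Matrix.nonsing_inv_mul _ hu, Matrix.one_mulVec]
      _ = (1 - Z T)⁻¹ *ᵥ ((1 - Z T) *ᵥ c₁) := (Matrix.mulVec_mulVec _ _ _).symm
      _ = (1 - Z T)⁻¹ *ᵥ (Z T *ᵥ w) := by rw [h1]
      _ = ((1 - Z T)⁻¹ * Z T) *ᵥ w := Matrix.mulVec_mulVec _ _ _
  -- conclude
  intro t ht
  by_cases hle : t ≤ t₁
  · rw [if_pos hle, if_neg (not_lt.mpr hle), add_zero]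
    rw [e₁ ⟨ht.1, hle⟩]
    show Z t *ᵥ c₁ = _
    rw [hc₁eq, Matrix.mulVec_mulVec, hw, Matrix.mulVec_mulVec, Matrix.mul_assoc]
  · rw [if_neg hle, if_pos (not_le.mp hle)]
    rw [e₂ ⟨(not_le.mp hle).le, ht.2.le⟩]
    show Z t *ᵥ (c₁ + w) = _
    rw [hc₁eq, Matrix.mul_add, Matrix.mul_one, Matrix.add_mul, Matrix.add_mulVec,
      Matrix.mulVec_add, Matrix.mulVec_mulVec, Matrix.mulVec_mulVec, hw,
      Matrix.mulVec_mulVec, Matrix.mul_assoc, Matrix.mul_assoc]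
end
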